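/- Let b₂ ∈ ℝ. Define V : ℝ² → ℝ² by V(x,y) = (y − x²/3, 2x³ − (2/3)xy − b₂x⁴ + b₂y²) and f : ℝ² → ℝ by f(x,y) = (y − x²)(y + x²)²·exp(−3b₂x). Then f is a first integral of the vector field V: for all (x,y) ∈ ℝ², the Fréchet derivative of f at (x,y) evaluated at the vector V(x,y) is zero; equivalently, (∂f/∂x)(x,y)·(y − x²/3) + (∂f/∂y)(x,y)·(2x³ − (2/3)xy − b₂x⁴ + b₂y²) = 0 for all (x,y) ∈ ℝ². -/

import Mathlib

/-- `f(x,y) = (y − x²)(y + x²)²·exp(−3b₂x)` is a first integral of the vector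
field `V(x,y) = (y − x²/3, 2x³ − (2/3)xy − b₂x⁴ + b₂y²)`: its Fréchet
derivative at each point vanishes on the vector `V(x,y)`. -/
theorem example_system_first_integral (b₂ : ℝ) :
    ∀ p : ℝ × ℝ,
      fderiv ℝ
        (fun q : ℝ × ℝ =>
          (q.2 - q.1 ^ 2) * (q.2 + q.1 ^ 2) ^ 2 * Real.exp (-3 * b₂ * q.1)) p
        (p.2 - p.1 ^ 2 / 3,
         2 * p.1 ^ 3 - (2 / 3) * p.1 * p.2 - b₂ * p.1 ^ 4 + b₂ * p.2 ^ 2) = 0 := by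
  rintro ⟨x, y⟩
  have hrw : (fun q : ℝ × ℝ =>
      (q.2 - q.1 ^ 2) * (q.2 + q.1 ^ 2) ^ 2 * Real.exp (-3 * b₂ * q.1))
      = (fun q : ℝ × ℝ =>
      (q.2 - q.1 * q.1) * ((q.2 + q.1 * q.1) * (q.2 + q.1 * q.1)) *
        Real.exp (-3 * b₂ * q.1)) := by
    funext q; ring_nf
  rw [hrw]
  have hfst : HasFDerivAt (fun q : ℝ × ℝ => q.1)
      (ContinuousLinearMap.fst ℝ ℝ ℝ) (x, y) := hasFDerivAt_fst
  have hsnd : HasFDerivAt (fun q : ℝ × ℝ => q.2)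
      (ContinuousLinearMap.snd ℝ ℝ ℝ) (x, y) := hasFDerivAt_snd
  have h1 := hsnd.sub (hfst.mul hfst)
  have h2 := (hsnd.add (hfst.mul hfst)).mul (hsnd.add (hfst.mul hfst))
  have h3 := (hfst.const_mul (-3 * b₂)).exp
  have hf := (h1.mul h2).mul h3
  rw [(show HasFDerivAt (fun q : ℝ × ℝ =>
      (q.2 - q.1 * q.1) * ((q.2 + q.1 * q.1) * (q.2 + q.1 * q.1)) *
        Real.exp (-3 * b₂ * q.1)) _ (x, y) from hf).fderiv]
  simp [ContinuousLinearMap.smul_apply]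
  ring
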